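/- Let Y be a nonnegative measurable process and ζ a nonnegative F_T-measurable random variable such that for some fixed probability measure Q̂ in a family Q that is stable under concatenation, Y_τ ≤ E^{Q̂}[ζ | F_τ] a.s. for every stopping time τ ∈ T_{0,T}. Then sup_{τ∈T_{0,T}} sup_{Q∈Q} E^Q[Y_τ] ≤ sup_{Q∈Q} E^Q[ζ]. -/

import Mathlib

open MeasureTheory Filter Set ENNReal Topology

/-- **Lemma 4.2 (techLemma1).** Let `𝒬` be a family of probability measures equivalent to `P`
which is stable under concatenation at stopping times (for `Q ∈ 𝒬` and a `[0,T]`-valued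
stopping time `τ`, the concatenated measure `Q ⊗_τ Q̂`, defined on sets by
`(Q ⊗_τ Q̂)(A) = E^Q[E^{Q̂}[1_A | F_τ]]`, again belongs to `𝒬`).  Let `ζ ≥ 0` be
`F_T`-measurable and `Y ≥ 0` a process such that `Y_τ ≤ E^{Q̂}[ζ | F_τ]` a.s. for some fixed
`Q̂ ∈ 𝒬` and every stopping time `τ ∈ T_{0,T}`.  Then
`sup_τ sup_{Q ∈ 𝒬} E^Q[Y_τ] ≤ sup_{Q ∈ 𝒬} E^Q[ζ]`
(equivalently: every upper bound `C` of `{E^Q[ζ]}` dominates every `E^Q[Y_τ]`). -/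
theorem sup_stopped_le_of_condexp_dominated
    {Ω : Type*} {m0 : MeasurableSpace Ω} (P : Measure Ω) [IsProbabilityMeasure P]
    (ℱ : Filtration ℝ m0) (T : ℝ) (hT : 0 < T)
    (𝒬 : Set (Measure Ω))
    (hprob : ∀ Q ∈ 𝒬, IsProbabilityMeasure Q)
    (hequiv : ∀ Q ∈ 𝒬, Q ≪ P ∧ P ≪ Q)
    (Qhat : Measure Ω) (hQhat : Qhat ∈ 𝒬)
    (Y : ℝ → Ω → ℝ) (hYpos : ∀ t ω, 0 ≤ Y t ω)
    (hYmeas : ∀ t, Measurable (Y t))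
    (ζ : Ω → ℝ) (hζpos : ∀ ω, 0 ≤ ζ ω) (hζmeas : Measurable ζ)
    (hζint : Integrable ζ Qhat)
    (hconcat : ∀ Q ∈ 𝒬, ∀ (τ : Ω → ℝ) (hτ : IsStoppingTime ℱ (fun ω => (τ ω : WithTop ℝ))),
      (∀ ω, τ ω ∈ Icc 0 T) →
      ∃ Q' ∈ 𝒬, ∀ A : Set Ω, MeasurableSet A →
        Q' A = ∫⁻ ω, ENNReal.ofReal
          ((Qhat[A.indicator (fun _ => (1 : ℝ)) | hτ.measurableSpace]) ω) ∂Q)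
    (hdom : ∀ (τ : Ω → ℝ) (hτ : IsStoppingTime ℱ (fun ω => (τ ω : WithTop ℝ))), (∀ ω, τ ω ∈ Icc 0 T) →
      ∀ᵐ ω ∂Qhat, Y (τ ω) ω ≤ (Qhat[ζ | hτ.measurableSpace]) ω) :
    ∀ C : ℝ≥0∞, (∀ Q ∈ 𝒬, ∫⁻ ω, ENNReal.ofReal (ζ ω) ∂Q ≤ C) →
      ∀ (τ : Ω → ℝ), IsStoppingTime ℱ (fun ω => (τ ω : WithTop ℝ)) → (∀ ω, τ ω ∈ Icc 0 T) →
      ∀ Q ∈ 𝒬, ∫⁻ ω, ENNReal.ofReal (Y (τ ω) ω) ∂Q ≤ C := by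
  intro C hC τ hτ hτmem Q hQ
  haveI := hprob Qhat hQhat
  haveI := hprob Q hQ
  have _dummy : True := trivial
  have hm : hτ.measurableSpace ≤ m0 := hτ.measurableSpace_le
  obtain ⟨Q', hQ'mem, hQ'A⟩ := hconcat Q hQ τ hτ hτmem
  haveI := hprob Q' hQ'mem
  -- transfer of a.e. statements from Qhat to Q
  have hQQhat : Q ≪ Qhat := (hequiv Q hQ).1.trans (hequiv Qhat hQhat).2
  have transfer : ∀ {p : Ω → Prop}, (∀ᵐ ω ∂Qhat, p ω) → (∀ᵐ ω ∂Q, p ω) :=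
    fun h => h.filter_mono hQQhat.ae_le
  -- measurability of conditional expectations
  have hcem : ∀ f : Ω → ℝ, Measurable fun ω => ENNReal.ofReal ((Qhat[f|hτ.measurableSpace]) ω) :=
    fun f => ((stronglyMeasurable_condExp.mono hm).measurable).ennreal_ofReal
  -- Lemma A : the defining property of Q' extends from indicators to simple functions
  have lemA : ∀ s : SimpleFunc Ω ℝ,
      ∫⁻ ω, ENNReal.ofReal ((Qhat[⇑s|hτ.measurableSpace]) ω) ∂Q ≤ ∫⁻ ω, ENNReal.ofReal (s ω) ∂Q' := by
    intro s
    induction s using SimpleFunc.induction with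
    | const c hA =>
      rename_i A
      have hcoe : ⇑(SimpleFunc.piecewise A hA (SimpleFunc.const Ω c) (SimpleFunc.const Ω 0))
          = fun ω => c * A.indicator (fun _ => (1 : ℝ)) ω := by
        funext ω
        by_cases h : ω ∈ A <;>
          simp [SimpleFunc.piecewise_apply, Set.indicator, h]
      rw [hcoe]
      set h0 : Ω → ℝ := Qhat[A.indicator (fun _ => (1 : ℝ))|hτ.measurableSpace] with hh0
      have hnnQ : ∀ᵐ ω ∂Q, 0 ≤ h0 ω :=
        transfer (condExp_nonneg (Filter.Eventually.of_forall fun ω =>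
          Set.indicator_nonneg (fun _ _ => zero_le_one) ω))
      have hsm : (Qhat[fun ω => c * A.indicator (fun _ => (1 : ℝ)) ω|hτ.measurableSpace])
          =ᵐ[Q] fun ω => c * h0 ω := by
        have h1 := condExp_smul (μ := Qhat) (m := hτ.measurableSpace) c (A.indicator (fun _ => (1 : ℝ)))
        have h2 : (fun ω => c * A.indicator (fun _ => (1 : ℝ)) ω)
            = c • (A.indicator (fun _ => (1 : ℝ))) := by
          funext ω; simp [smul_eq_mul]
        rw [h2]
        refine transfer (h1.mono fun ω hω => ?_)
        simp only [Pi.smul_apply, smul_eq_mul] at hω ⊢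
        exact hω
      calc ∫⁻ ω, ENNReal.ofReal ((Qhat[fun ω => c * A.indicator (fun _ => (1 : ℝ)) ω|hτ.measurableSpace]) ω) ∂Q
          = ∫⁻ ω, ENNReal.ofReal (c * h0 ω) ∂Q := by
            exact lintegral_congr_ae (hsm.mono fun ω hω => congrArg ENNReal.ofReal hω)
        _ ≤ ∫⁻ ω, ENNReal.ofReal c * ENNReal.ofReal (h0 ω) ∂Q := by
            refine lintegral_mono_ae (hnnQ.mono fun ω hω => ?_)
            rcases le_or_gt 0 c with hc | hc
            · rw [ENNReal.ofReal_mul hc]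
            · have : c * h0 ω ≤ 0 := mul_nonpos_of_nonpos_of_nonneg hc.le hω
              simp [ENNReal.ofReal_eq_zero.2 this]
        _ = ENNReal.ofReal c * ∫⁻ ω, ENNReal.ofReal (h0 ω) ∂Q :=
            lintegral_const_mul _ (hcem _)
        _ = ENNReal.ofReal c * Q' A := by rw [← hQ'A A hA]
        _ = ∫⁻ ω, ENNReal.ofReal (c * A.indicator (fun _ => (1 : ℝ)) ω) ∂Q' := by
            have : (fun ω => ENNReal.ofReal (c * A.indicator (fun _ => (1 : ℝ)) ω))
                = A.indicator (fun _ => ENNReal.ofReal c) := by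
              funext ω
              by_cases h : ω ∈ A <;> simp [Set.indicator, h]
            rw [this, lintegral_indicator hA, setLIntegral_const]
    | add hdisj ihf ihg =>
      rename_i f g
      have hf_int : Integrable (⇑f) Qhat := f.integrable_of_isFiniteMeasure
      have hg_int : Integrable (⇑g) Qhat := g.integrable_of_isFiniteMeasure
      have hadd : (Qhat[⇑(f + g)|hτ.measurableSpace]) =ᵐ[Q] fun ω => (Qhat[⇑f|hτ.measurableSpace]) ω + (Qhat[⇑g|hτ.measurableSpace]) ω := by
        rw [SimpleFunc.coe_add]
        exact transfer (condExp_add hf_int hg_int hτ.measurableSpace)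
      calc ∫⁻ ω, ENNReal.ofReal ((Qhat[⇑(f + g)|hτ.measurableSpace]) ω) ∂Q
          = ∫⁻ ω, ENNReal.ofReal ((Qhat[⇑f|hτ.measurableSpace]) ω + (Qhat[⇑g|hτ.measurableSpace]) ω) ∂Q := by
            exact lintegral_congr_ae (hadd.mono fun ω hω => congrArg ENNReal.ofReal hω)
        _ ≤ ∫⁻ ω, (ENNReal.ofReal ((Qhat[⇑f|hτ.measurableSpace]) ω) + ENNReal.ofReal ((Qhat[⇑g|hτ.measurableSpace]) ω)) ∂Q :=
            lintegral_mono fun ω => ENNReal.ofReal_add_le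
        _ = ∫⁻ ω, ENNReal.ofReal ((Qhat[⇑f|hτ.measurableSpace]) ω) ∂Q
              + ∫⁻ ω, ENNReal.ofReal ((Qhat[⇑g|hτ.measurableSpace]) ω) ∂Q :=
            lintegral_add_left (hcem _) _
        _ ≤ ∫⁻ ω, ENNReal.ofReal (f ω) ∂Q' + ∫⁻ ω, ENNReal.ofReal (g ω) ∂Q' :=
            add_le_add ihf ihg
        _ = ∫⁻ ω, (ENNReal.ofReal (f ω) + ENNReal.ofReal (g ω)) ∂Q' :=
            (lintegral_add_left (f.measurable.ennreal_ofReal) _).symm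
        _ = ∫⁻ ω, ENNReal.ofReal ((f + g) ω) ∂Q' := by
            refine lintegral_congr fun ω => ?_
            have h0 : f ω = 0 ∨ g ω = 0 := by
              by_contra h
              push_neg at h
              exact (Set.disjoint_left.1 hdisj h.1) h.2
            rcases h0 with h | h <;> simp [h]
  -- the approximating simple functions
  set F : Ω → ℝ≥0∞ := fun ω => ENNReal.ofReal (ζ ω) with hF_def
  have hF : Measurable F := hζmeas.ennreal_ofReal
  set s : ℕ → SimpleFunc Ω ℝ :=
    fun n => (SimpleFunc.eapprox F n).map ENNReal.toReal with hs_def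
  have key1 : ∀ n ω, ENNReal.ofReal (s n ω) = SimpleFunc.eapprox F n ω := by
    intro n ω
    simp only [hs_def, SimpleFunc.coe_map, Function.comp_apply]
    exact ENNReal.ofReal_toReal (SimpleFunc.eapprox_lt_top F n ω).ne
  have heapprox_le : ∀ n ω, SimpleFunc.eapprox F n ω ≤ F ω := fun n ω =>
    (le_iSup (fun n => SimpleFunc.eapprox F n ω) n).trans_eq
      (SimpleFunc.iSup_eapprox_apply hF ω)
  have key2 : ∀ n ω, s n ω ≤ ζ ω := by
    intro n ω
    have h1 : (SimpleFunc.eapprox F n ω).toReal ≤ (F ω).toReal :=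
      ENNReal.toReal_mono ENNReal.ofReal_ne_top (heapprox_le n ω)
    simpa [hs_def, hF_def, SimpleFunc.coe_map, Function.comp_apply,
      ENNReal.toReal_ofReal (hζpos ω)] using h1
  have key3 : ∀ ω, Monotone fun n => s n ω := by
    intro ω n k hnk
    simp only [hs_def, SimpleFunc.coe_map, Function.comp_apply]
    exact ENNReal.toReal_mono (SimpleFunc.eapprox_lt_top F k ω).ne
      (SimpleFunc.monotone_eapprox F hnk ω)
  have hs_nn : ∀ n ω, 0 ≤ s n ω := fun n ω => ENNReal.toReal_nonneg
  have hs_int : ∀ n, Integrable (⇑(s n)) Qhat := fun n =>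
    (s n).integrable_of_isFiniteMeasure
  -- the ENNReal-valued conditional expectations
  set Gn : ℕ → Ω → ℝ≥0∞ := fun n ω => ENNReal.ofReal ((Qhat[⇑(s n)|hτ.measurableSpace]) ω) with hGn_def
  set G : Ω → ℝ≥0∞ := fun ω => ENNReal.ofReal ((Qhat[ζ|hτ.measurableSpace]) ω) with hG_def
  have hGnmeas : ∀ n, Measurable (Gn n) := fun n => hcem _
  have hGmeas : Measurable G := hcem _
  -- a.e. monotonicity and boundedness
  have hmonoAE : ∀ᵐ ω ∂Qhat, ∀ n, (Qhat[⇑(s n)|hτ.measurableSpace]) ω ≤ (Qhat[⇑(s (n + 1))|hτ.measurableSpace]) ω :=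
    ae_all_iff.2 fun n => condExp_mono (hs_int n) (hs_int (n + 1))
      (Filter.Eventually.of_forall fun ω => key3 ω (Nat.le_succ n))
  have hleAE : ∀ᵐ ω ∂Qhat, ∀ n, (Qhat[⇑(s n)|hτ.measurableSpace]) ω ≤ (Qhat[ζ|hτ.measurableSpace]) ω :=
    ae_all_iff.2 fun n => condExp_mono (hs_int n) hζint
      (Filter.Eventually.of_forall fun ω => key2 n ω)
  have hGn_monoAE : ∀ᵐ ω ∂Qhat, Monotone fun n => Gn n ω :=
    hmonoAE.mono fun ω h => monotone_nat_of_le_succ fun n => ENNReal.ofReal_le_ofReal (h n)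
  set L : Ω → ℝ≥0∞ := fun ω => ⨆ n, Gn n ω with hL_def
  have hLleG : ∀ᵐ ω ∂Qhat, L ω ≤ G ω :=
    hleAE.mono fun ω h => iSup_le fun n => ENNReal.ofReal_le_ofReal (h n)
  have htendL : ∀ᵐ ω ∂Qhat, Tendsto (fun n => Gn n ω) atTop (𝓝 (L ω)) :=
    hGn_monoAE.mono fun ω h => tendsto_atTop_iSup h
  -- lintegral computations under Qhat
  have hGn_lint : ∀ n, ∫⁻ ω, Gn n ω ∂Qhat = ∫⁻ ω, SimpleFunc.eapprox F n ω ∂Qhat := by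
    intro n
    have h1 : ENNReal.ofReal (∫ ω, (Qhat[⇑(s n)|hτ.measurableSpace]) ω ∂Qhat) = ∫⁻ ω, Gn n ω ∂Qhat :=
      ofReal_integral_eq_lintegral_ofReal integrable_condExp
        (condExp_nonneg (Filter.Eventually.of_forall fun ω => hs_nn n ω))
    have h2 : ∫ ω, (Qhat[⇑(s n)|hτ.measurableSpace]) ω ∂Qhat = ∫ ω, s n ω ∂Qhat := integral_condExp hm
    have h3 : ENNReal.ofReal (∫ ω, s n ω ∂Qhat) = ∫⁻ ω, ENNReal.ofReal (s n ω) ∂Qhat :=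
      ofReal_integral_eq_lintegral_ofReal (hs_int n)
        (Filter.Eventually.of_forall fun ω => hs_nn n ω)
    rw [← h1, h2, h3]
    exact lintegral_congr fun ω => key1 n ω
  have hG_lint : ∫⁻ ω, G ω ∂Qhat = ∫⁻ ω, F ω ∂Qhat := by
    have h1 : ENNReal.ofReal (∫ ω, (Qhat[ζ|hτ.measurableSpace]) ω ∂Qhat) = ∫⁻ ω, G ω ∂Qhat :=
      ofReal_integral_eq_lintegral_ofReal integrable_condExp
        (condExp_nonneg (Filter.Eventually.of_forall fun ω => hζpos ω))
    have h2 : ∫ ω, (Qhat[ζ|hτ.measurableSpace]) ω ∂Qhat = ∫ ω, ζ ω ∂Qhat := integral_condExp hm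
    have h3 : ENNReal.ofReal (∫ ω, ζ ω ∂Qhat) = ∫⁻ ω, ENNReal.ofReal (ζ ω) ∂Qhat :=
      ofReal_integral_eq_lintegral_ofReal hζint
        (Filter.Eventually.of_forall fun ω => hζpos ω)
    rw [← h1, h2, h3]
  have hG_fin : ∫⁻ ω, G ω ∂Qhat ≠ ∞ := by
    have h1 : ENNReal.ofReal (∫ ω, (Qhat[ζ|hτ.measurableSpace]) ω ∂Qhat) = ∫⁻ ω, G ω ∂Qhat :=
      ofReal_integral_eq_lintegral_ofReal integrable_condExp
        (condExp_nonneg (Filter.Eventually.of_forall fun ω => hζpos ω))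
    rw [← h1]
    exact ENNReal.ofReal_ne_top
  have hL_lint : ∫⁻ ω, L ω ∂Qhat = ∫⁻ ω, G ω ∂Qhat := by
    have h1 : ∫⁻ ω, L ω ∂Qhat = ⨆ n, ∫⁻ ω, Gn n ω ∂Qhat :=
      lintegral_iSup' (fun n => (hGnmeas n).aemeasurable) hGn_monoAE
    have h2 : (⨆ n, ∫⁻ ω, SimpleFunc.eapprox F n ω ∂Qhat) = ∫⁻ ω, F ω ∂Qhat := by
      rw [← lintegral_iSup (fun n => (SimpleFunc.eapprox F n).measurable)
        (fun i j hij ω => SimpleFunc.monotone_eapprox F hij ω)]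
      exact lintegral_congr fun ω => SimpleFunc.iSup_eapprox_apply hF ω
    rw [h1, hG_lint, ← h2]
    exact iSup_congr hGn_lint
  -- L = G a.e., hence the Gn converge a.e. to G
  have hLG : L =ᵐ[Qhat] G :=
    ae_eq_of_ae_le_of_lintegral_le hLleG (hL_lint ▸ hG_fin) hGmeas.aemeasurable hL_lint.ge
  have htendG : ∀ᵐ ω ∂Qhat, Tendsto (fun n => Gn n ω) atTop (𝓝 (G ω)) := by
    filter_upwards [htendL, hLG] with ω h1 h2
    rwa [h2] at h1
  have htendGQ : ∀ᵐ ω ∂Q, Tendsto (fun n => Gn n ω) atTop (𝓝 (G ω)) := transfer htendG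
  -- each Gn-integral under Q is bounded by C
  have hGnC : ∀ n, ∫⁻ ω, Gn n ω ∂Q ≤ C := by
    intro n
    refine (lemA (s n)).trans ?_
    have h1 : ∫⁻ ω, ENNReal.ofReal (s n ω) ∂Q' ≤ ∫⁻ ω, F ω ∂Q' := by
      refine lintegral_mono fun ω => ?_
      rw [key1 n ω]
      exact heapprox_le n ω
    exact h1.trans (hC Q' hQ'mem)
  -- conclude
  have hdomQ : ∀ᵐ ω ∂Q, Y (τ ω) ω ≤ (Qhat[ζ|hτ.measurableSpace]) ω := transfer (hdom τ hτ hτmem)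
  calc ∫⁻ ω, ENNReal.ofReal (Y (τ ω) ω) ∂Q
      ≤ ∫⁻ ω, G ω ∂Q :=
        lintegral_mono_ae (hdomQ.mono fun ω h => ENNReal.ofReal_le_ofReal h)
    _ = ∫⁻ ω, liminf (fun n => Gn n ω) atTop ∂Q := by
        exact lintegral_congr_ae (htendGQ.mono fun ω h => h.liminf_eq.symm)
    _ ≤ liminf (fun n => ∫⁻ ω, Gn n ω ∂Q) atTop :=
        lintegral_liminf_le' fun n => (hGnmeas n).aemeasurable
    _ ≤ C := by
        refine (liminf_le_liminf (Filter.Eventually.of_forall hGnC)).trans ?_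
        simp [liminf_const]
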